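/- Let S ⊂ ℝ³ be a discrete set of collinear points with at least 3 points, such that S is an objective atomic structure (each point sees the same environment up to orthogonal transformation). Then S is of the form {i·e + c : i ∈ ℤ} or {i·e + c : i ∈ ℤ} ∪ {(i+λ)·e + c : i ∈ ℤ} with 0 < λ < 1, i.e., S is invariant under translation by some nonzero vector e. -/

import Mathlib

open Filter

noncomputable section

abbrev E3 := EuclideanSpace ℝ (Fin 3)

lemma core_periodic (T : Set ℝ) (h0 : (0:ℝ) ∈ T)
    (hdisc : ∀ z : ℝ, ¬ AccPt z (𝓟 T))
    (hcard : ∃ a ∈ T, ∃ b ∈ T, ∃ c ∈ T, a ≠ b ∧ a ≠ c ∧ b ≠ c)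
    (hsym : ∀ t ∈ T, (∀ s, s ∈ T ↔ s - t ∈ T) ∨ (∀ s, s ∈ T ↔ t - s ∈ T)) :
    ∃ d : ℝ, 0 < d ∧ (∀ s ∈ T, s + d ∈ T) ∧
      (T = {s | ∃ i : ℤ, s = i * d} ∨
       ∃ c, 0 < c ∧ c < d ∧
         T = {s | ∃ i : ℤ, s = i * d} ∪ {s | ∃ i : ℤ, s = i * d + c}) := by
  -- two distinct nonzero elements
  obtain ⟨a, ha, b, hb, hab, ha0, hb0⟩ :
      ∃ a ∈ T, ∃ b ∈ T, a ≠ b ∧ a ≠ 0 ∧ b ≠ 0 := by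
    obtain ⟨a, ha, b, hb, c, hc, hab, hac, hbc⟩ := hcard
    by_cases h : a = 0
    · exact ⟨b, hb, c, hc, hbc, fun h' => hab (h.trans h'.symm), fun h' => hac (h.trans h'.symm)⟩
    by_cases h' : b = 0
    · exact ⟨a, ha, c, hc, hac, h, fun h'' => hbc (h'.trans h''.symm)⟩
    · exact ⟨a, ha, b, hb, hab, h, h'⟩
  set P : AddSubgroup ℝ :=
    { carrier := {d | ∀ s, s ∈ T ↔ s + d ∈ T}
      zero_mem' := by intro s; simp
      add_mem' := by
        intro x y hx hy s
        rw [hx s, hy (s + x), add_assoc]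
      neg_mem' := by
        intro x hx s
        have := (hx (s + -x)).symm
        rwa [neg_add_cancel_right] at this } with hPdef
  have hPmem : ∀ x : ℝ, x ∈ P ↔ ∀ s, s ∈ T ↔ s + x ∈ T := fun x => Iff.rfl
  have hPT : ∀ x ∈ P, x ∈ T := by
    intro x hx
    have := ((hPmem x).mp hx 0).mp h0
    simpa using this
  have htrans : ∀ t, (∀ s, s ∈ T ↔ s - t ∈ T) → t ∈ P := by
    intro t ht
    rw [hPmem]
    intro s
    have := (ht (s + t)).symm
    rwa [add_sub_cancel_right] at this
  have hrefl2 : ∀ t₁ t₂ : ℝ, (∀ s, s ∈ T ↔ t₁ - s ∈ T) → (∀ s, s ∈ T ↔ t₂ - s ∈ T) →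
      t₁ - t₂ ∈ P := by
    intro t₁ t₂ h1 h2 s
    rw [h2 s, h1 (t₂ - s)]
    constructor
    · intro h; convert h using 1; ring
    · intro h; convert h using 1; ring
  have hA : ∃ x ∈ P, x ≠ 0 := by
    rcases hsym a ha with h1 | h2
    · exact ⟨a, htrans a h1, ha0⟩
    rcases hsym b hb with h1 | h2'
    · exact ⟨b, htrans b h1, hb0⟩
    · exact ⟨a - b, hrefl2 a b h2 h2', sub_ne_zero.mpr hab⟩
  obtain ⟨g, hg⟩ : ∃ g : ℝ, P = AddSubgroup.closure {g} := by
    rcases P.dense_or_cyclic with hd | hc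
    · exfalso
      apply hdisc 0
      rw [accPt_iff_nhds]
      intro U hU
      obtain ⟨ε, hε, hball⟩ := Metric.mem_nhds_iff.mp hU
      obtain ⟨y, hyP, hy⟩ := hd.exists_mem_open isOpen_Ioo
        (Set.nonempty_Ioo.mpr (by linarith : ε/2 < ε))
      refine ⟨y, ⟨hball ?_, hPT y hyP⟩, by nlinarith [hy.1, hy.2]⟩
      simp only [Metric.mem_ball, Real.dist_eq, sub_zero]
      rw [abs_of_pos (by linarith [hy.1] : (0:ℝ) < y)]
      exact hy.2
    · exact hc
  have hg0 : g ≠ 0 := by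
    rintro rfl
    obtain ⟨x, hxP, hx0⟩ := hA
    rw [hg] at hxP
    simp [AddSubgroup.mem_closure_singleton] at hxP
    exact hx0 hxP.symm
  set d := |g| with hdd
  have hd0 : 0 < d := abs_pos.mpr hg0
  have hdP : ∀ x : ℝ, x ∈ P ↔ ∃ i : ℤ, x = i * d := by
    intro x
    rw [hg, AddSubgroup.mem_closure_singleton]
    constructor
    · rintro ⟨n, rfl⟩
      rcases abs_cases g with ⟨h1, _⟩ | ⟨h1, _⟩
      · exact ⟨n, by rw [hdd, h1]; push_cast [zsmul_eq_mul]; ring⟩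
      · exact ⟨-n, by rw [hdd, h1]; push_cast [zsmul_eq_mul]; ring⟩
    · rintro ⟨i, rfl⟩
      rcases abs_cases g with ⟨h1, _⟩ | ⟨h1, _⟩
      · exact ⟨i, by rw [hdd, h1]; push_cast [zsmul_eq_mul]; ring⟩
      · exact ⟨-i, by rw [hdd, h1]; push_cast [zsmul_eq_mul]; ring⟩
  have hdinP : d ∈ P := (hdP d).mpr ⟨1, by push_cast; ring⟩
  have hstep : ∀ s ∈ T, s + d ∈ T := fun s hs => ((hPmem d).mp hdinP s).mp hs
  -- multiples of d shift T
  have hshift : ∀ (i : ℤ) (s : ℝ), s ∈ T → s + i * d ∈ T := by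
    intro i s hs
    have : (i : ℝ) * d ∈ P := (hdP _).mpr ⟨i, rfl⟩
    exact ((hPmem _).mp this s).mp hs
  -- no element of P strictly between 0 and d, and small elements are 0
  have hsmall : ∀ x ∈ P, |x| < d → x = 0 := by
    intro x hx hxd
    obtain ⟨i, rfl⟩ := (hdP x).mp hx
    rw [abs_mul, abs_of_pos hd0] at hxd
    have : |(i:ℝ)| < 1 := by
      by_contra h
      push_neg at h
      nlinarith
    have hi : i = 0 := by
      have h2 := abs_lt.mp this
      have h3 : (-1:ℤ) < i := by exact_mod_cast h2.1
      have h4 : i < 1 := by exact_mod_cast h2.2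
      omega
    simp [hi]
  -- at most one residue in (0,d)
  have hnotmid : ∀ c ∈ T, 0 < c → c < d → ∀ s, s ∈ T ↔ c - s ∈ T := by
    intro c hc hc0 hcd
    rcases hsym c hc with h1 | h2
    · exfalso
      have hcP : c ∈ P := htrans c h1
      have := hsmall c hcP (by rw [abs_of_pos hc0]; exact hcd)
      exact hc0.ne' this
    · exact h2
  have huniq : ∀ c₁ ∈ T, ∀ c₂ ∈ T, 0 < c₁ → c₁ < d → 0 < c₂ → c₂ < d → c₁ = c₂ := by
    intro c₁ hc₁ c₂ hc₂ h10 h1d h20 h2d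
    have hP12 : c₁ - c₂ ∈ P := hrefl2 c₁ c₂ (hnotmid c₁ hc₁ h10 h1d) (hnotmid c₂ hc₂ h20 h2d)
    have := hsmall _ hP12 (abs_lt.mpr ⟨by linarith, by linarith⟩)
    linarith [sub_eq_zero.mp this]
  -- residues
  have hres : ∀ t ∈ T, ∃ r, r ∈ T ∧ 0 ≤ r ∧ r < d ∧ t = ⌊t/d⌋ * d + r := by
    intro t ht
    refine ⟨t - ⌊t/d⌋ * d, ?_, ?_, ?_, by ring⟩
    · have := hshift (-⌊t/d⌋) t ht
      convert this using 1
      push_cast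
      ring
    · have h1 : (⌊t/d⌋ : ℝ) ≤ t / d := Int.floor_le _
      have h2 := mul_le_mul_of_nonneg_right h1 hd0.le
      rw [div_mul_cancel₀ t hd0.ne'] at h2
      linarith
    · have h1 : t / d < ⌊t/d⌋ + 1 := Int.lt_floor_add_one _
      have h2 := mul_lt_mul_of_pos_right h1 hd0
      rw [div_mul_cancel₀ t hd0.ne'] at h2
      nlinarith
  by_cases hmid : ∃ c ∈ T, 0 < c ∧ c < d
  · obtain ⟨c, hc, hc0, hcd⟩ := hmid
    refine ⟨d, hd0, hstep, Or.inr ⟨c, hc0, hcd, ?_⟩⟩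
    ext t
    constructor
    · intro ht
      obtain ⟨r, hrT, hr0, hrd, hteq⟩ := hres t ht
      rcases eq_or_lt_of_le hr0 with hr | hr
      · exact Or.inl ⟨⌊t/d⌋, by rw [← hr] at hteq; simpa using hteq⟩
      · have hrc : r = c := huniq r hrT c hc hr hrd hc0 hcd
        rw [hrc] at hteq
        exact Or.inr ⟨⌊t/d⌋, hteq⟩
    · rintro (⟨i, rfl⟩ | ⟨i, rfl⟩)
      · have := hshift i 0 h0
        simpa using this
      · have := hshift i c hc
        convert this using 1
        ring
  · push_neg at hmid
    refine ⟨d, hd0, hstep, Or.inl ?_⟩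
    ext t
    constructor
    · intro ht
      obtain ⟨r, hrT, hr0, hrd, hteq⟩ := hres t ht
      rcases eq_or_lt_of_le hr0 with hr | hr
      · exact ⟨⌊t/d⌋, by rw [← hr] at hteq; simpa using hteq⟩
      · exact absurd hrd (not_lt.mpr (le_of_not_gt (fun h => (hmid r hrT hr).not_gt h)))
    · rintro ⟨i, rfl⟩
      have := hshift i 0 h0
      simpa using this


/-- A discrete collinear objective atomic structure `S ⊆ ℝ³` with at least three
points is a periodic line of points `{i·e + c : i ∈ ℤ}` or the union of two
interleaved periodic lines `{i·e + c} ∪ {(i+λ)·e + c}`, `0 < λ < 1`; in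
particular `S` is invariant under translation by a nonzero vector `e`. -/
theorem collinear_objective_structure_is_periodic
    (S : Set E3) (x₁ : E3) (hx₁ : x₁ ∈ S)
    (hcol : Collinear ℝ S)
    (hdisc : ∀ z : E3, ¬ AccPt z (𝓟 S))
    (hcard : ∃ a ∈ S, ∃ b ∈ S, ∃ c ∈ S, a ≠ b ∧ a ≠ c ∧ b ≠ c)
    (hobj : ∀ x ∈ S, ∃ Q : E3 ≃ₗᵢ[ℝ] E3, (fun y => Q (y - x₁) + x) '' S = S) :
    ((∃ e c : E3, e ≠ 0 ∧ S = {p : E3 | ∃ i : ℤ, p = (i : ℝ) • e + c}) ∨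
     (∃ (e c : E3) (lam : ℝ), e ≠ 0 ∧ 0 < lam ∧ lam < 1 ∧
       S = {p : E3 | ∃ i : ℤ, p = (i : ℝ) • e + c} ∪
           {p : E3 | ∃ i : ℤ, p = ((i : ℝ) + lam) • e + c})) ∧
    ∃ e : E3, e ≠ 0 ∧ ∀ s ∈ S, s + e ∈ S := by
  obtain ⟨v, hv⟩ := (collinear_iff_of_mem hx₁).mp hcol
  have hv' : ∀ p ∈ S, ∃ r : ℝ, p = r • v + x₁ := hv
  obtain ⟨a, haS, b, hbS, c, hcS, hab, hac, hbc⟩ := hcard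
  have hvne : v ≠ 0 := by
    rintro rfl
    obtain ⟨ra, ha⟩ := hv' a haS
    obtain ⟨rb, hb⟩ := hv' b hbS
    simp only [smul_zero, zero_add] at ha hb
    exact hab (ha.trans hb.symm)
  set f : ℝ → E3 := fun t => t • v + x₁ with hf
  have hfinj : Function.Injective f := by
    intro s t hst
    have h1 : s • v = t • v := by
      have := hst
      simp only [hf] at this
      exact add_right_cancel this
    exact smul_left_injective ℝ hvne h1
  set T : Set ℝ := {t | f t ∈ S} with hT
  have hST : S = f '' T := by
    apply Set.Subset.antisymm
    · intro p hp
      obtain ⟨r, hr⟩ := hv' p hp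
      refine ⟨r, ?_, hr.symm⟩
      simp only [hT, Set.mem_setOf_eq, hf]
      rw [← hr]
      exact hp
    · rintro p ⟨t, ht, rfl⟩
      exact ht
  have h0T : (0:ℝ) ∈ T := by
    have : f 0 = x₁ := by simp [hf]
    rw [hT, Set.mem_setOf_eq, this]
    exact hx₁
  -- transfer card
  obtain ⟨ra, hra⟩ := hv' a haS
  obtain ⟨rb, hrb⟩ := hv' b hbS
  obtain ⟨rc, hrc⟩ := hv' c hcS
  have hraT : ra ∈ T := by simp only [hT, Set.mem_setOf_eq, hf]; rw [← hra]; exact haS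
  have hrbT : rb ∈ T := by simp only [hT, Set.mem_setOf_eq, hf]; rw [← hrb]; exact hbS
  have hrcT : rc ∈ T := by simp only [hT, Set.mem_setOf_eq, hf]; rw [← hrc]; exact hcS
  have hcardT : ∃ a ∈ T, ∃ b ∈ T, ∃ c ∈ T, a ≠ b ∧ a ≠ c ∧ b ≠ c := by
    refine ⟨ra, hraT, rb, hrbT, rc, hrcT, ?_, ?_, ?_⟩
    · rintro rfl; exact hab (hra.trans hrb.symm)
    · rintro rfl; exact hac (hra.trans hrc.symm)
    · rintro rfl; exact hbc (hrb.trans hrc.symm)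
  -- a nonzero element of T
  obtain ⟨s₀, hs₀T, hs₀0⟩ : ∃ s₀ ∈ T, s₀ ≠ 0 := by
    by_cases h : ra = 0
    · refine ⟨rb, hrbT, ?_⟩
      rintro rfl
      exact hab (by rw [hra, hrb, h])
    · exact ⟨ra, hraT, h⟩
  -- discreteness transfer
  have hfc : Continuous f := (continuous_id.smul continuous_const).add continuous_const
  have hdiscT : ∀ z : ℝ, ¬ AccPt z (𝓟 T) := by
    intro z hz
    apply hdisc (f z)
    rw [accPt_iff_nhds] at hz ⊢
    intro U hU
    obtain ⟨y, ⟨hy1, hy2⟩, hy3⟩ := hz (f ⁻¹' U) (hfc.continuousAt.preimage_mem_nhds hU)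
    exact ⟨f y, ⟨hy1, by rw [hST]; exact Set.mem_image_of_mem f hy2⟩,
      fun h => hy3 (hfinj h)⟩
  have hfsub : ∀ s : ℝ, f s - x₁ = s • v := by
    intro s; simp [hf]
  -- symmetry transfer
  have hsymT : ∀ t ∈ T, (∀ s, s ∈ T ↔ s - t ∈ T) ∨ (∀ s, s ∈ T ↔ t - s ∈ T) := by
    intro t ht
    obtain ⟨Q, hQ⟩ := hobj (f t) ht
    have h1 : Q (s₀ • v) + f t ∈ S := by
      have := Set.mem_image_of_mem (fun y => Q (y - x₁) + f t) (show f s₀ ∈ S from hs₀T)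
      rw [hQ] at this
      simpa [hfsub s₀] using this
    obtain ⟨u, hu⟩ := hv' _ h1
    have hQs₀ : Q (s₀ • v) = (u - t) • v := by
      have h' : Q (s₀ • v) + (t • v + x₁) = u • v + x₁ := hu ▸ rfl
      have h'' : Q (s₀ • v) = u • v + x₁ - (t • v + x₁) := eq_sub_of_add_eq h'
      rw [h'', sub_smul]
      abel
    have hnorm : |u - t| = |s₀| := by
      have h1n : ‖Q (s₀ • v)‖ = ‖s₀ • v‖ := Q.norm_map _
      rw [hQs₀, norm_smul, norm_smul] at h1n
      have hvn : ‖v‖ ≠ 0 := norm_ne_zero_iff.mpr hvne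
      field_simp at h1n
      simpa [Real.norm_eq_abs] using h1n
    obtain ⟨ε, hε1, hεQ⟩ : ∃ ε : ℝ, (ε = 1 ∨ ε = -1) ∧ ∀ s : ℝ, Q (s • v) = (ε * s) • v := by
      have key : ∀ ε : ℝ, u - t = ε * s₀ → ∀ s : ℝ, Q (s • v) = (ε * s) • v := by
        intro ε hε s
        have h2 : s • v = (s / s₀) • (s₀ • v) := by
          rw [smul_smul]
          congr 1
          field_simp
        rw [h2, Q.map_smul, hQs₀, hε, smul_smul]
        congr 1
        field_simp
      rcases abs_eq_abs.mp hnorm with h | h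
      · exact ⟨1, Or.inl rfl, key 1 (by linarith)⟩
      · exact ⟨-1, Or.inr rfl, key (-1) (by linarith)⟩
    have hεsq : ε * ε = 1 := by rcases hε1 with rfl | rfl <;> norm_num
    have himg : ∀ w : ℝ, Q (f w - x₁) + f t = f (t + ε * w) := by
      intro w
      rw [hfsub, hεQ]
      show (ε * w) • v + (t • v + x₁) = (t + ε * w) • v + x₁
      rw [add_smul]
      abel
    have key : ∀ s, s ∈ T ↔ ε * (s - t) ∈ T := by
      intro s
      constructor
      · intro hs
        have : f s ∈ (fun y => Q (y - x₁) + f t) '' S := by rw [hQ]; exact hs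
        obtain ⟨y, hyS, hy⟩ := this
        rw [hST] at hyS
        obtain ⟨w, hwT, rfl⟩ := hyS
        have hy' : Q (f w - x₁) + f t = f s := hy
        rw [himg w] at hy'
        have hsw : s = t + ε * w := (hfinj hy').symm
        have hw2 : ε * (s - t) = w := by
          rw [hsw]
          calc ε * (t + ε * w - t) = (ε * ε) * w := by ring
            _ = w := by rw [hεsq, one_mul]
        rwa [hw2]
      · intro hw
        have : f (t + ε * (ε * (s - t))) ∈ S := by
          rw [← himg]
          rw [← hQ]
          exact Set.mem_image_of_mem _ hw
        have heq : t + ε * (ε * (s - t)) = s := by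
          have h3 : ε * (ε * (s - t)) = s - t := by rw [← mul_assoc, hεsq, one_mul]
          rw [h3]; ring
        rwa [heq] at this
    rcases hε1 with rfl | rfl
    · left
      intro s
      simpa using key s
    · right
      intro s
      have := key s
      rwa [show (-1:ℝ) * (s - t) = t - s by ring] at this
  obtain ⟨d, hd0, hstep, hcases⟩ := core_periodic T h0T hdiscT hcardT hsymT
  have hene : d • v ≠ 0 := smul_ne_zero hd0.ne' hvne
  have hfeq1 : ∀ i : ℤ, f ((i:ℝ) * d) = (i:ℝ) • (d • v) + x₁ := by
    intro i
    show ((i:ℝ) * d) • v + x₁ = (i:ℝ) • (d • v) + x₁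
    rw [smul_smul]
  constructor
  · rcases hcases with hTeq | ⟨c₀, hc₀0, hc₀d, hTeq⟩
    · left
      refine ⟨d • v, x₁, hene, ?_⟩
      rw [hST, hTeq]
      ext p
      simp only [Set.mem_image, Set.mem_setOf_eq]
      constructor
      · rintro ⟨s, ⟨i, rfl⟩, rfl⟩
        exact ⟨i, (hfeq1 i)⟩
      · rintro ⟨i, rfl⟩
        exact ⟨(i:ℝ) * d, ⟨i, rfl⟩, (hfeq1 i).symm ▸ rfl⟩
    · right
      have hfeq2 : ∀ i : ℤ, f ((i:ℝ) * d + c₀) = ((i:ℝ) + c₀/d) • (d • v) + x₁ := by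
        intro i
        show ((i:ℝ) * d + c₀) • v + x₁ = ((i:ℝ) + c₀/d) • (d • v) + x₁
        rw [smul_smul]
        congr 2
        field_simp
      refine ⟨d • v, x₁, c₀ / d, hene, div_pos hc₀0 hd0, (div_lt_one hd0).mpr hc₀d, ?_⟩
      rw [hST, hTeq]
      ext p
      simp only [Set.image_union, Set.mem_union, Set.mem_image, Set.mem_setOf_eq]
      constructor
      · rintro (⟨s, ⟨i, rfl⟩, rfl⟩ | ⟨s, ⟨i, rfl⟩, rfl⟩)
        · exact Or.inl ⟨i, hfeq1 i⟩
        · exact Or.inr ⟨i, hfeq2 i⟩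
      · rintro (⟨i, rfl⟩ | ⟨i, rfl⟩)
        · exact Or.inl ⟨(i:ℝ) * d, ⟨i, rfl⟩, hfeq1 i⟩
        · exact Or.inr ⟨(i:ℝ) * d + c₀, ⟨i, rfl⟩, hfeq2 i⟩
  · refine ⟨d • v, hene, ?_⟩
    intro s hs
    rw [hST] at hs ⊢
    obtain ⟨u, hu, rfl⟩ := hs
    refine ⟨u + d, hstep u hu, ?_⟩
    show (u + d) • v + x₁ = (u • v + x₁) + d • v
    rw [add_smul]
    abel
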